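/- Let G be a group acting measurably on a space X, σ: G × X → ℝ an additive cocycle (σ(g₁g₂, x) = σ(g₁, g₂x) + σ(g₂, x)) bounded on S × X where S is the support of a probability measure μ on G. Set κ_S = sup{|σ(g,x)| : g ∈ S, x ∈ X}. Let ν be a μ-stationary probability measure on X and ℓ(μ) = ∬ σ(g,x) dμ(g) dν(x). If there exists a bounded measurable ψ on X solving ψ(x) - ∫ψ(gx) dμ(g) = ∫σ(g,x) dμ(g) - ℓ(μ), then for every t > 0, n ∈ ℕ and x ∈ X, P(|σ(L_n, x) - nℓ(μ)| ≥ nt) ≤ 2 exp(-n t² / (32 (κ_S + ‖ψ‖_∞)²)), where L_n = X_n ⋯ X_1 with X_i i.i.d. of law μ. -/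

import Mathlib

set_option maxHeartbeats 1000000

open MeasureTheory ProbabilityTheory Real

section Helpers

variable {α : Type*} [MeasurableSpace α]

lemma aux_integrable_of_ae_bound {m : Measure α} [IsFiniteMeasure m] {f : α → ℝ} {C : ℝ}
    (hf : AEStronglyMeasurable f m) (h : ∀ᵐ a ∂m, |f a| ≤ C) : Integrable f m :=
  (integrable_const C).mono' hf (by filter_upwards [h] with a ha; simpa using ha)

lemma aux_abs_integral_le {m : Measure α} [IsProbabilityMeasure m] {f : α → ℝ} {C : ℝ}
    (h : ∀ᵐ a ∂m, |f a| ≤ C) : |∫ a, f a ∂m| ≤ C := by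
  have := norm_integral_le_of_norm_le_const (μ := m) (f := f) (C := C) (by simpa using h)
  simpa using this

lemma aux_hoeffding {m : Measure α} [IsProbabilityMeasure m] (f : α → ℝ) (hf : Measurable f)
    (b l : ℝ) (hb : ∀ᵐ a ∂m, |f a| ≤ b) (h0 : ∫ a, f a ∂m = 0) :
    ∫ a, Real.exp (l * f a) ∂m ≤ Real.exp (l ^ 2 * b ^ 2 / 2) := by
  have hbnn : 0 ≤ b := by
    obtain ⟨a, ha⟩ := hb.exists
    exact (abs_nonneg _).trans ha
  rcases hbnn.eq_or_lt with hb0 | hbpos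
  · -- b = 0 : f = 0 a.e.
    have hae : ∀ᵐ a ∂m, Real.exp (l * f a) = 1 := by
      filter_upwards [hb] with a ha
      have : f a = 0 := by rw [← hb0] at ha; exact abs_eq_zero.mp (le_antisymm ha (abs_nonneg _))
      simp [this]
    rw [integral_congr_ae hae]
    simp
    positivity
  · -- b > 0
    have hfint : Integrable f m := aux_integrable_of_ae_bound hf.aestronglyMeasurable hb
    set E1 := Real.exp (-(l * b)) with hE1
    set E2 := Real.exp (l * b) with hE2
    have hpt : ∀ᵐ a ∂m, Real.exp (l * f a) ≤
        E1 / (2 * b) * (b - f a) + E2 / (2 * b) * (b + f a) := by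
      filter_upwards [hb] with a ha
      have h1 : 0 ≤ (b - f a) / (2 * b) := by
        have h := (abs_le.mp ha).2
        apply div_nonneg (by linarith) (by linarith)
      have h2 : 0 ≤ (b + f a) / (2 * b) := by
        have := (abs_le.mp ha).1
        have : 0 ≤ b + f a := by linarith
        positivity
      have hsum : (b - f a) / (2 * b) + (b + f a) / (2 * b) = 1 := by
        field_simp; ring
      have key := convexOn_exp.2 (Set.mem_univ (-(l * b))) (Set.mem_univ (l * b)) h1 h2 hsum
      have harg : ((b - f a) / (2 * b)) • (-(l * b)) + ((b + f a) / (2 * b)) • (l * b)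
          = l * f a := by
        simp only [smul_eq_mul]
        field_simp
        ring
      rw [harg] at key
      simp only [smul_eq_mul] at key
      calc Real.exp (l * f a) ≤ (b - f a) / (2 * b) * E1 + (b + f a) / (2 * b) * E2 := key
        _ = E1 / (2 * b) * (b - f a) + E2 / (2 * b) * (b + f a) := by ring
    have hlhs_int : Integrable (fun a => Real.exp (l * f a)) m := by
      apply aux_integrable_of_ae_bound ((hf.const_mul l).exp).aestronglyMeasurable
      filter_upwards [hb] with a ha
      rw [abs_of_pos (Real.exp_pos _)]
      apply Real.exp_le_exp.mpr
      calc l * f a ≤ |l * f a| := le_abs_self _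
        _ = |l| * |f a| := abs_mul _ _
        _ ≤ |l| * b := by gcongr
    have hint1 : Integrable (fun a => b - f a) m := (integrable_const b).sub hfint
    have hint2 : Integrable (fun a => b + f a) m := (integrable_const b).add hfint
    have hrhs_int : Integrable
        (fun a => E1 / (2 * b) * (b - f a) + E2 / (2 * b) * (b + f a)) m :=
      (hint1.const_mul _).add (hint2.const_mul _)
    calc ∫ a, Real.exp (l * f a) ∂m
        ≤ ∫ a, (E1 / (2 * b) * (b - f a) + E2 / (2 * b) * (b + f a)) ∂m :=
          integral_mono_ae hlhs_int hrhs_int hpt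
      _ = E1 / (2 * b) * (b - 0) + E2 / (2 * b) * (b + 0) := by
          rw [integral_add (hint1.const_mul _) (hint2.const_mul _), integral_const_mul,
            integral_const_mul]
          have e1 : ∫ a, (b - f a) ∂m = b - 0 := by
            rw [integral_sub (integrable_const b) hfint, h0, integral_const]; simp
          have e2 : ∫ a, (b + f a) ∂m = b + 0 := by
            rw [integral_add (integrable_const b) hfint, h0, integral_const]; simp
          rw [e1, e2]
      _ = Real.cosh (l * b) := by
          rw [Real.cosh_eq, hE1, hE2]
          field_simp
          ring
      _ ≤ Real.exp ((l * b) ^ 2 / 2) := Real.cosh_le_exp_half_sq _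
      _ = Real.exp (l ^ 2 * b ^ 2 / 2) := by ring_nf

end Helpers

section IndepHelpers

lemma aux_indep_mono {Ω : Type*} {mΩ : MeasurableSpace Ω} {μ : Measure Ω}
    {m₁ m₂ m₁' m₂' : MeasurableSpace Ω} (h : Indep m₁ m₂ μ) (h1 : m₁' ≤ m₁) (h2 : m₂' ≤ m₂) :
    Indep m₁' m₂' μ := by
  rw [Indep_iff] at h ⊢
  exact fun t1 t2 ht1 ht2 => h t1 t2 (h1 _ ht1) (h2 _ ht2)

end IndepHelpers

theorem cocycle_concentration
    {G : Type*} [Group G] [MeasurableSpace G]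
    {X : Type*} [MeasurableSpace X] [MulAction G X]
    (hact : Measurable fun p : G × X => p.1 • p.2)
    (σ : G → X → ℝ) (hσ : Measurable fun p : G × X => σ p.1 p.2)
    (hcocycle : ∀ g₁ g₂ : G, ∀ x : X, σ (g₁ * g₂) x = σ g₁ (g₂ • x) + σ g₂ x)
    (μ : Measure G) [IsProbabilityMeasure μ] (S : Set G) (hS : μ Sᶜ = 0)
    (κS : ℝ) (hκS : ∀ g ∈ S, ∀ x : X, |σ g x| ≤ κS)
    (ν : Measure X) [IsProbabilityMeasure ν]
    (hstat : (μ.prod ν).map (fun p : G × X => p.1 • p.2) = ν)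
    (ℓ : ℝ) (hℓ : ℓ = ∫ g, ∫ x, σ g x ∂ν ∂μ)
    (ψ : X → ℝ) (hψ : Measurable ψ) (Cψ : ℝ) (hψb : ∀ x, |ψ x| ≤ Cψ)
    (hPoisson : ∀ x : X, ψ x - ∫ g, ψ (g • x) ∂μ = (∫ g, σ g x ∂μ) - ℓ)
    {Ω : Type*} {mΩ : MeasurableSpace Ω} (Pr : Measure Ω) [IsProbabilityMeasure Pr]
    (Xs : ℕ → Ω → G) (hXmeas : ∀ i, Measurable (Xs i))
    (hindep : iIndepFun Xs Pr)
    (hdist : ∀ i, Pr.map (Xs i) = μ)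
    (L : ℕ → Ω → G) (hL0 : ∀ ω, L 0 ω = 1)
    (hLrec : ∀ (n : ℕ) (ω : Ω), L (n + 1) ω = Xs (n + 1) ω * L n ω)
    (t : ℝ) (ht : 0 < t) (n : ℕ) (x : X) :
    Pr {ω | (n : ℝ) * t ≤ |σ (L n ω) x - n * ℓ|} ≤
      ENNReal.ofReal (2 * Real.exp (-((n : ℝ) * t ^ 2) / (32 * (κS + Cψ) ^ 2))) := by
  classical
  -- a measurable full-measure subset of S
  obtain ⟨T, hT1, hT2, hT3⟩ := exists_measurable_superset_of_null hS
  set S' : Set G := Tᶜ with hS'def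
  have hS'm : MeasurableSet S' := hT2.compl
  have hS'sub : S' ⊆ S := by
    rw [hS'def]
    intro g hg
    by_contra hgs
    exact hg (hT1 hgs)
  have hS'null : μ S'ᶜ = 0 := by
    rw [hS'def, compl_compl]; exact hT3
  -- basic positivity facts
  have hSne : S'.Nonempty := by
    apply MeasureTheory.nonempty_of_measure_ne_zero (μ := μ)
    intro h0
    have h2 : μ Set.univ ≤ μ S' + μ S'ᶜ := by
      calc μ Set.univ = μ (S' ∪ S'ᶜ) := by rw [Set.union_compl_self]
        _ ≤ μ S' + μ S'ᶜ := measure_union_le _ _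
    rw [h0, hS'null, measure_univ] at h2
    simp at h2
  obtain ⟨g0, hg0⟩ := hSne
  have hκ0 : 0 ≤ κS := (abs_nonneg _).trans (hκS g0 (hS'sub hg0) x)
  have hC0 : 0 ≤ Cψ := (abs_nonneg _).trans (hψb x)
  set c : ℝ := κS + Cψ with hcdef
  have hc0 : 0 ≤ c := add_nonneg hκ0 hC0
  -- trivial bound helper
  have htriv : ∀ r : ℝ, 1 ≤ 2 * Real.exp r →
      Pr {ω | (n : ℝ) * t ≤ |σ (L n ω) x - n * ℓ|} ≤ ENNReal.ofReal (2 * Real.exp r) := by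
    intro r hr
    calc Pr _ ≤ 1 := prob_le_one
      _ ≤ ENNReal.ofReal (2 * Real.exp r) := ENNReal.one_le_ofReal.mpr hr
  -- degenerate cases
  rcases Nat.eq_zero_or_pos n with hn0 | hn
  · subst hn0
    apply htriv
    simp
  rcases hc0.eq_or_lt with hceq | hcpos
  · -- c = 0, so the denominator vanishes and the RHS is 2
    apply htriv
    rw [← hceq]
    norm_num
  -- main notations
  set Y : ℕ → Ω → X := fun k ω => L k ω • x with hYdef
  set fc : G → X → ℝ := fun g y => σ g y - ℓ + (ψ (g • y) - ψ y) with hfdef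
  set M : ℕ → Ω → ℝ := fun k ω => ∑ i ∈ Finset.range k, fc (Xs (i+1) ω) (Y i ω) with hMdef
  have hfm : Measurable (fun p : G × X => fc p.1 p.2) := by
    simp only [hfdef]
    exact (hσ.sub measurable_const).add ((hψ.comp hact).sub (hψ.comp measurable_snd))
  -- a.e. membership facts
  have hμS' : ∀ᵐ g ∂μ, g ∈ S' := by
    rw [ae_iff]
    convert hS'null using 2
    rfl
  have hXS' : ∀ i, ∀ᵐ ω ∂Pr, Xs i ω ∈ S' := by
    intro i
    rw [ae_iff]
    have h1 : Pr (Xs i ⁻¹' S'ᶜ) ≤ (Pr.map (Xs i)) S'ᶜ :=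
      Measure.le_map_apply (hXmeas i).aemeasurable _
    rw [hdist i, hS'null] at h1
    have : Pr (Xs i ⁻¹' S'ᶜ) = 0 := le_antisymm h1 zero_le
    convert this using 2
    rfl
  have hXSae : ∀ᵐ ω ∂Pr, ∀ i, Xs i ω ∈ S' := ae_all_iff.mpr hXS'
  -- bound on ℓ
  have hℓb : |ℓ| ≤ κS := by
    rw [hℓ]
    apply aux_abs_integral_le
    filter_upwards [hμS'] with g hg
    exact aux_abs_integral_le (Filter.Eventually.of_forall fun y => hκS g (hS'sub hg) y)
  -- bound on fc
  have hfb : ∀ g ∈ S', ∀ y : X, |fc g y| ≤ 2 * c := by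
    intro g hg y
    have h1 := abs_le.mp (hκS g (hS'sub hg) y)
    have h2 := abs_le.mp hℓb
    have h3 := abs_le.mp (hψb (g • y))
    have h4 := abs_le.mp (hψb y)
    simp only [hfdef]
    rw [abs_le, hcdef]
    constructor <;> linarith
  -- mean zero property of fc
  have hσyint : ∀ y : X, Integrable (fun g => σ g y) μ := by
    intro y
    apply aux_integrable_of_ae_bound
      ((hσ.comp (measurable_id.prodMk measurable_const)).aestronglyMeasurable)
    filter_upwards [hμS'] with g hg
    exact hκS g (hS'sub hg) y
  have hψyint : ∀ y : X, Integrable (fun g => ψ (g • y)) μ := by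
    intro y
    apply aux_integrable_of_ae_bound
      ((hψ.comp (hact.comp (measurable_id.prodMk measurable_const))).aestronglyMeasurable)
    exact Filter.Eventually.of_forall fun g => hψb _
  have hf0 : ∀ y : X, ∫ g, fc g y ∂μ = 0 := by
    intro y
    simp only [hfdef]
    have h1 : Integrable (fun g => σ g y - ℓ) μ := (hσyint y).sub (integrable_const ℓ)
    have h2 : Integrable (fun g => ψ (g • y) - ψ y) μ := (hψyint y).sub (integrable_const (ψ y))
    rw [integral_add h1 h2, integral_sub (hσyint y) (integrable_const ℓ),
      integral_sub (hψyint y) (integrable_const (ψ y)), integral_const, integral_const]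
    have := hPoisson y
    simp only [probReal_univ, ENNReal.toReal_one, smul_eq_mul, one_mul]
    linarith
  -- sigma algebra filtration
  set F : ℕ → MeasurableSpace Ω :=
    (fun k => ⨆ i ∈ Set.Iic k, MeasurableSpace.comap (Xs i) inferInstance) with hFdef
  have hFle : ∀ k, F k ≤ mΩ := fun k => iSup₂_le fun i _ => (hXmeas i).comap_le
  have hFmono : Monotone F := fun a b hab =>
    biSup_mono fun i hi => Set.mem_Iic.mpr ((Set.mem_Iic.mp hi).trans hab)
  have hXsFm : ∀ i k, i ≤ k → Measurable[F k] (Xs i) := by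
    intro i k hik
    apply Measurable.of_comap_le
    simp only [hFdef]
    exact le_biSup (fun i => MeasurableSpace.comap (Xs i) inferInstance)
      (Set.mem_Iic.mpr hik)
  have hYmF : ∀ k, Measurable[F k] (Y k) := by
    intro k
    induction k with
    | zero =>
      have : Y 0 = fun _ => x := funext fun ω => by
        simp only [hYdef, hL0, one_smul]
      rw [this]
      exact measurable_const
    | succ k ih =>
      have : Y (k+1) = fun ω => Xs (k+1) ω • Y k ω := funext fun ω => by
        simp only [hYdef]; rw [hLrec, mul_smul]
      rw [this]
      exact hact.comp (Measurable.prodMk (hXsFm (k+1) (k+1) le_rfl)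
        (ih.mono (hFmono (Nat.le_succ k)) le_rfl))
  have hYm : ∀ k, Measurable (Y k) := fun k => (hYmF k).mono (hFle k) le_rfl
  have hMmF : ∀ k, Measurable[F k] (M k) := by
    intro k
    simp only [hMdef]
    apply Finset.measurable_sum
    intro i hi
    have hik : i + 1 ≤ k := Nat.succ_le_of_lt (Finset.mem_range.mp hi)
    exact hfm.comp (Measurable.prodMk (hXsFm _ _ hik)
      ((hYmF i).mono (hFmono ((Nat.le_succ i).trans hik)) le_rfl))
  have hMm : ∀ k, Measurable (M k) := fun k => (hMmF k).mono (hFle k) le_rfl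
  -- a.e. bound on M
  have hMb : ∀ k, ∀ᵐ ω ∂Pr, |M k ω| ≤ k * (2 * c) := by
    intro k
    filter_upwards [hXSae] with ω hω
    simp only [hMdef]
    calc |∑ i ∈ Finset.range k, fc (Xs (i+1) ω) (Y i ω)|
        ≤ ∑ i ∈ Finset.range k, |fc (Xs (i+1) ω) (Y i ω)| := Finset.abs_sum_le_sum_abs _ _
      _ ≤ ∑ _i ∈ Finset.range k, (2 * c) :=
          Finset.sum_le_sum fun i _ => hfb _ (hω (i+1)) _
      _ = k * (2 * c) := by rw [Finset.sum_const, Finset.card_range, nsmul_eq_mul]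
  -- cocycle identities
  have hσ1 : ∀ y : X, σ 1 y = 0 := by
    intro y
    have h := hcocycle 1 1 y
    rw [one_mul, one_smul] at h
    linarith
  have hLdecomp : ∀ k ω, σ (L k ω) x = ∑ i ∈ Finset.range k, σ (Xs (i+1) ω) (Y i ω) := by
    intro k
    induction k with
    | zero => intro ω; simp [hL0, hσ1]
    | succ k ih =>
      intro ω
      rw [hLrec, hcocycle (Xs (k+1) ω) (L k ω) x, Finset.sum_range_succ, ← ih ω]
      simp only [hYdef]
      ring
  have hM_repr : ∀ k ω, M k ω = (σ (L k ω) x - k * ℓ) + (ψ (Y k ω) - ψ x) := by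
    intro k ω
    induction k with
    | zero => simp [hMdef, hL0, hσ1, hYdef, one_smul]
    | succ k ih =>
      have hstep : M (k+1) ω = M k ω + fc (Xs (k+1) ω) (Y k ω) := by
        simp only [hMdef, Finset.sum_range_succ]
      have hYk : L k ω • x = Y k ω := by simp only [hYdef]
      have hYk1 : Xs (k+1) ω • Y k ω = Y (k+1) ω := by
        simp only [hYdef]; rw [hLrec, mul_smul]
      rw [hstep, ih, hLrec, hcocycle (Xs (k+1) ω) (L k ω) x]
      simp only [hfdef]
      rw [hYk1, hYk]
      push_cast
      ring
  -- the MGF bound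
  have hmgf : ∀ l : ℝ, ∀ k : ℕ,
      ∫ ω, Real.exp (l * M k ω) ∂Pr ≤ Real.exp (k * (2 * l^2 * c^2)) := by
    intro l k
    induction k with
    | zero =>
      simp [hMdef]
    | succ k ih =>
      set W : Ω → ℝ × X := fun ω => (M k ω, Y k ω) with hWdef
      have hWm : Measurable W := (hMm k).prodMk (hYm k)
      have hWmF : Measurable[F k] W :=
        Measurable.prodMk (hMmF k) (hYmF k)
      have hiI : iIndep (fun i => MeasurableSpace.comap (Xs i) inferInstance) Pr :=
        (iIndepFun_iff_iIndep _ _ _).mp hindep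
      have hIndep2 : Indep (F k) (MeasurableSpace.comap (Xs (k+1)) inferInstance) Pr := by
        have hdisj : Disjoint (Set.Iic k) ({k+1} : Set ℕ) := by
          rw [Set.disjoint_singleton_right]
          simp
        have h := indep_iSup_of_disjoint (fun i => (hXmeas i).comap_le) hiI hdisj
        simp only [hFdef]
        simpa using h
      have hIF : IndepFun W (Xs (k+1)) Pr := by
        rw [IndepFun_iff_Indep]
        exact aux_indep_mono hIndep2 hWmF.comap_le le_rfl
      have hmap : Pr.map (fun ω => (W ω, Xs (k+1) ω)) = (Pr.map W).prod μ := by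
        rw [← hdist (k+1)]
        exact (indepFun_iff_map_prod_eq_prod_map_map hWm.aemeasurable
          (hXmeas _).aemeasurable).mp hIF
      set ρ : Measure (ℝ × X) := Pr.map W with hρdef
      have hρprob : IsProbabilityMeasure ρ := Measure.isProbabilityMeasure_map hWm.aemeasurable
      set H : (ℝ × X) × G → ℝ := fun p => Real.exp (l * (p.1.1 + fc p.2 p.1.2)) with hHdef
      have hHm : Measurable H := by
        simp only [hHdef]
        exact ((measurable_const.mul ((measurable_fst.fst).add
          (hfm.comp (measurable_snd.prodMk measurable_fst.snd))))).exp
      -- a.e. bound on the first coordinate under ρ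
      have hBset : MeasurableSet {w : ℝ × X | |w.1| ≤ k * (2 * c)} :=
        measurableSet_le measurable_fst.abs measurable_const
      have hρbound : ∀ᵐ w ∂ρ, |w.1| ≤ k * (2 * c) := by
        rw [hρdef, ae_map_iff hWm.aemeasurable hBset]
        exact hMb k
      -- integrability of H on the product
      have hbadnull : (ρ.prod μ)
          ({w : ℝ × X | ¬ |w.1| ≤ k * (2 * c)} ×ˢ (Set.univ : Set G) ∪
            (Set.univ : Set (ℝ × X)) ×ˢ S'ᶜ) = 0 := by
        apply measure_union_null
        · rw [Measure.prod_prod]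
          have : ρ {w : ℝ × X | ¬ |w.1| ≤ k * (2 * c)} = 0 := ae_iff.mp hρbound
          rw [this, zero_mul]
        · rw [Measure.prod_prod, hS'null, mul_zero]
      have hgood : ∀ᵐ p ∂(ρ.prod μ),
          p ∉ ({w : ℝ × X | ¬ |w.1| ≤ k * (2 * c)} ×ˢ (Set.univ : Set G) ∪
            (Set.univ : Set (ℝ × X)) ×ˢ S'ᶜ) := by
        exact MeasureTheory.measure_eq_zero_iff_ae_notMem.mp hbadnull
      have hintH : Integrable H (ρ.prod μ) := by
        apply aux_integrable_of_ae_bound hHm.aestronglyMeasurable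
          (C := Real.exp (|l| * (k * (2 * c) + 2 * c)))
        filter_upwards [hgood] with p hp
        simp only [Set.mem_union, Set.mem_prod, Set.mem_setOf_eq, Set.mem_univ, and_true,
          true_and, not_or] at hp
        obtain ⟨hp1, hp2⟩ := hp
        rw [not_not] at hp1
        rw [Set.notMem_compl_iff] at hp2
        simp only [hHdef]
        rw [abs_of_pos (Real.exp_pos _)]
        apply Real.exp_le_exp.mpr
        calc l * (p.1.1 + fc p.2 p.1.2) ≤ |l * (p.1.1 + fc p.2 p.1.2)| := le_abs_self _
          _ = |l| * |p.1.1 + fc p.2 p.1.2| := abs_mul _ _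
          _ ≤ |l| * (|p.1.1| + |fc p.2 p.1.2|) := by
              gcongr
              exact abs_add_le _ _
          _ ≤ |l| * (k * (2 * c) + 2 * c) :=
              mul_le_mul_of_nonneg_left (add_le_add hp1 (hfb _ hp2 _)) (abs_nonneg l)
      -- inner integral bound
      have hinner : ∀ w : ℝ × X,
          ∫ g, H (w, g) ∂μ ≤ Real.exp (l * w.1) * Real.exp (2 * l^2 * c^2) := by
        intro w
        have heq : ∫ g, H (w, g) ∂μ
            = Real.exp (l * w.1) * ∫ g, Real.exp (l * fc g w.2) ∂μ := by
          simp only [hHdef]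
          rw [← integral_const_mul]
          congr 1
          funext g
          rw [← Real.exp_add]
          ring_nf
        rw [heq]
        have hhoef : ∫ g, Real.exp (l * fc g w.2) ∂μ ≤ Real.exp (l^2 * (2*c)^2 / 2) := by
          apply aux_hoeffding _ (hfm.comp (measurable_id.prodMk measurable_const))
          · filter_upwards [hμS'] with g hg
            exact hfb g hg w.2
          · exact hf0 w.2
        have : Real.exp (l^2 * (2*c)^2 / 2) = Real.exp (2 * l^2 * c^2) := by ring_nf
        rw [this] at hhoef
        exact mul_le_mul_of_nonneg_left hhoef (Real.exp_pos _).le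
      have hint1 : Integrable (fun w => ∫ g, H (w, g) ∂μ) ρ := hintH.integral_prod_left
      have hintexp : Integrable (fun w : ℝ × X => Real.exp (l * w.1)) ρ := by
        apply aux_integrable_of_ae_bound ((measurable_fst.const_mul l).exp).aestronglyMeasurable
          (C := Real.exp (|l| * (k * (2 * c))))
        filter_upwards [hρbound] with w hw
        rw [abs_of_pos (Real.exp_pos _)]
        apply Real.exp_le_exp.mpr
        calc l * w.1 ≤ |l * w.1| := le_abs_self _
          _ = |l| * |w.1| := abs_mul _ _
          _ ≤ |l| * (k * (2 * c)) := mul_le_mul_of_nonneg_left hw (abs_nonneg l)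
      calc ∫ ω, Real.exp (l * M (k+1) ω) ∂Pr
          = ∫ ω, H (W ω, Xs (k+1) ω) ∂Pr := by
            apply integral_congr_ae
            apply Filter.Eventually.of_forall
            intro ω
            simp only [hHdef, hWdef, hMdef, Finset.sum_range_succ]
        _ = ∫ p, H p ∂(Pr.map (fun ω => (W ω, Xs (k+1) ω))) :=
            (integral_map (hWm.prodMk (hXmeas _)).aemeasurable
              hHm.aestronglyMeasurable).symm
        _ = ∫ p, H p ∂(ρ.prod μ) := by rw [hmap]
        _ = ∫ w, ∫ g, H (w, g) ∂μ ∂ρ := integral_prod _ hintH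
        _ ≤ ∫ w, Real.exp (l * w.1) * Real.exp (2 * l^2 * c^2) ∂ρ := by
            apply integral_mono_ae hint1 (hintexp.mul_const _)
            exact Filter.Eventually.of_forall hinner
        _ = Real.exp (2 * l^2 * c^2) * ∫ w, Real.exp (l * w.1) ∂ρ := by
            rw [integral_mul_const]
            ring
        _ = Real.exp (2 * l^2 * c^2) * ∫ ω, Real.exp (l * M k ω) ∂Pr := by
            rw [hρdef, integral_map hWm.aemeasurable
              ((measurable_fst.const_mul l).exp).aestronglyMeasurable]
        _ ≤ Real.exp (2 * l^2 * c^2) * Real.exp (k * (2 * l^2 * c^2)) := by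
            exact mul_le_mul_of_nonneg_left ih (Real.exp_pos _).le
        _ = Real.exp ((k+1 : ℕ) * (2 * l^2 * c^2)) := by
            rw [← Real.exp_add]
            push_cast
            ring
  -- ##### final assembly #####
  set r : ℝ := -((n : ℝ) * t ^ 2) / (32 * c ^ 2) with hrdef
  by_cases h4C : 4 * Cψ ≤ (n : ℝ) * t
  · -- main Chernoff case
    set a : ℝ := (n : ℝ) * t / 2 with hadef
    set l0 : ℝ := t / (8 * c ^ 2) with hl0def
    have hl0 : 0 ≤ l0 := by positivity
    have hintpos : Integrable (fun ω => Real.exp (l0 * M n ω)) Pr := by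
      apply aux_integrable_of_ae_bound ((hMm n).const_mul l0).exp.aestronglyMeasurable
        (C := Real.exp (|l0| * ((n : ℝ) * (2 * c))))
      filter_upwards [hMb n] with ω hω
      rw [abs_of_pos (Real.exp_pos _)]
      apply Real.exp_le_exp.mpr
      calc l0 * M n ω ≤ |l0 * M n ω| := le_abs_self _
        _ = |l0| * |M n ω| := abs_mul _ _
        _ ≤ |l0| * ((n : ℝ) * (2 * c)) := mul_le_mul_of_nonneg_left hω (abs_nonneg _)
    have hintneg : Integrable (fun ω => Real.exp (l0 * (-(M n ω)))) Pr := by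
      apply aux_integrable_of_ae_bound (((hMm n).neg.const_mul l0).exp.aestronglyMeasurable)
        (C := Real.exp (|l0| * ((n : ℝ) * (2 * c))))
      filter_upwards [hMb n] with ω hω
      rw [abs_of_pos (Real.exp_pos _)]
      apply Real.exp_le_exp.mpr
      calc l0 * (-(M n ω)) ≤ |l0 * (-(M n ω))| := le_abs_self _
        _ = |l0| * |M n ω| := by rw [abs_mul, abs_neg]
        _ ≤ |l0| * ((n : ℝ) * (2 * c)) := mul_le_mul_of_nonneg_left hω (abs_nonneg _)
    have hmgfpos : mgf (M n) Pr l0 ≤ Real.exp ((n : ℝ) * (2 * l0^2 * c^2)) := hmgf l0 n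
    have hmgfneg : mgf (fun ω => -(M n ω)) Pr l0 ≤ Real.exp ((n : ℝ) * (2 * l0^2 * c^2)) := by
      have h := hmgf (-l0) n
      rw [neg_sq] at h
      calc mgf (fun ω => -(M n ω)) Pr l0 = ∫ ω, Real.exp ((-l0) * M n ω) ∂Pr := by
            simp only [mgf, mul_neg, neg_mul]
        _ ≤ Real.exp ((n : ℝ) * (2 * l0^2 * c^2)) := h
    have hexp_val : -l0 * a + (n : ℝ) * (2 * l0^2 * c^2) = r := by
      rw [hrdef, hl0def, hadef]
      have hcne : c ≠ 0 := ne_of_gt hcpos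
      field_simp
      ring
    have htail : ∀ Z : Ω → ℝ, Integrable (fun ω => Real.exp (l0 * Z ω)) Pr →
        mgf Z Pr l0 ≤ Real.exp ((n : ℝ) * (2 * l0^2 * c^2)) →
        Pr {ω | a ≤ Z ω} ≤ ENNReal.ofReal (Real.exp r) := by
      intro Z hint hmgfZ
      have h1 := measure_ge_le_exp_mul_mgf (X := Z) (μ := Pr) (t := l0) a hl0 hint
      have h2 : (Pr {ω | a ≤ Z ω}).toReal ≤ Real.exp r := by
        calc (Pr {ω | a ≤ Z ω}).toReal ≤ Real.exp (-l0 * a) * mgf Z Pr l0 := h1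
          _ ≤ Real.exp (-l0 * a) * Real.exp ((n : ℝ) * (2 * l0^2 * c^2)) :=
              mul_le_mul_of_nonneg_left hmgfZ (Real.exp_pos _).le
          _ = Real.exp r := by rw [← Real.exp_add, hexp_val]
      calc Pr {ω | a ≤ Z ω} = ENNReal.ofReal (Pr {ω | a ≤ Z ω}).toReal :=
            (ENNReal.ofReal_toReal (measure_ne_top _ _)).symm
        _ ≤ ENNReal.ofReal (Real.exp r) := ENNReal.ofReal_le_ofReal h2
    have hsub : {ω | (n : ℝ) * t ≤ |σ (L n ω) x - n * ℓ|} ⊆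
        {ω | a ≤ M n ω} ∪ {ω | a ≤ -(M n ω)} := by
      intro ω hω
      simp only [Set.mem_setOf_eq] at hω
      have hrepr := hM_repr n ω
      have hb1 := abs_le.mp (hψb (Y n ω))
      have hb2 := abs_le.mp (hψb x)
      have hdiff : |ψ (Y n ω) - ψ x| ≤ 2 * Cψ :=
        abs_le.mpr ⟨by linarith, by linarith⟩
      have h5 : |σ (L n ω) x - (n : ℝ) * ℓ| ≤ |M n ω| + 2 * Cψ := by
        have he : σ (L n ω) x - (n : ℝ) * ℓ = M n ω - (ψ (Y n ω) - ψ x) := by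
          rw [hrepr]; ring
        rw [he]
        calc |M n ω - (ψ (Y n ω) - ψ x)|
            ≤ |M n ω| + |ψ (Y n ω) - ψ x| := abs_sub _ _
          _ ≤ |M n ω| + 2 * Cψ := by linarith
      have habs : a ≤ |M n ω| := by
        rw [hadef]; linarith
      rcases le_abs.mp habs with h | h
      · exact Or.inl h
      · exact Or.inr h
    calc Pr {ω | (n : ℝ) * t ≤ |σ (L n ω) x - n * ℓ|}
        ≤ Pr ({ω | a ≤ M n ω} ∪ {ω | a ≤ -(M n ω)}) := measure_mono hsub
      _ ≤ Pr {ω | a ≤ M n ω} + Pr {ω | a ≤ -(M n ω)} := measure_union_le _ _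
      _ ≤ ENNReal.ofReal (Real.exp r) + ENNReal.ofReal (Real.exp r) :=
          add_le_add (htail (M n) hintpos hmgfpos)
            (htail (fun ω => -(M n ω)) hintneg hmgfneg)
      _ = ENNReal.ofReal (2 * Real.exp r) := by
          rw [← ENNReal.ofReal_add (Real.exp_pos r).le (Real.exp_pos r).le, ← two_mul]
  · push_neg at h4C
    by_cases h2κ : t ≤ 2 * κS
    · -- small deviation: the bound is trivial
      have hnt0 : (0:ℝ) ≤ (n : ℝ) * t := by positivity
      have h8 : (n : ℝ) * t ^ 2 ≤ 2 * c ^ 2 := by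
        rw [hcdef]
        nlinarith [sq_nonneg (κS - Cψ), ht.le, hκ0, hC0]
      have hr16 : -(1/16 : ℝ) ≤ r := by
        rw [hrdef, neg_div]
        apply neg_le_neg
        rw [div_le_iff₀ (by positivity : (0:ℝ) < 32 * c ^ 2)]
        nlinarith
      have hone : (1:ℝ) ≤ 2 * Real.exp r := by
        have h1 := Real.add_one_le_exp (-(1/16 : ℝ))
        have h2 : Real.exp (-(1/16 : ℝ)) ≤ Real.exp r := Real.exp_le_exp.mpr hr16
        nlinarith [Real.exp_pos r]
      exact htriv r hone
    · -- large deviation: the event is null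
      push_neg at h2κ
      have hnull : Pr {ω | ¬ ∀ i, Xs i ω ∈ S'} = 0 := ae_iff.mp hXSae
      refine le_trans (le_of_eq (measure_mono_null ?_ hnull)) zero_le
      intro ω hω
      simp only [Set.mem_setOf_eq] at hω ⊢
      intro hall
      have hbound : |σ (L n ω) x| ≤ (n : ℝ) * κS := by
        rw [hLdecomp n ω]
        calc |∑ i ∈ Finset.range n, σ (Xs (i+1) ω) (Y i ω)|
            ≤ ∑ i ∈ Finset.range n, |σ (Xs (i+1) ω) (Y i ω)| := Finset.abs_sum_le_sum_abs _ _
          _ ≤ ∑ _i ∈ Finset.range n, κS :=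
              Finset.sum_le_sum fun i _ => hκS _ (hS'sub (hall (i+1))) _
          _ = (n : ℝ) * κS := by rw [Finset.sum_const, Finset.card_range, nsmul_eq_mul]
      have habs1 := abs_le.mp hbound
      have habs2 := abs_le.mp hℓb
      have hn1 : (1:ℝ) ≤ (n : ℝ) := Nat.one_le_cast.mpr hn
      have h2 : |σ (L n ω) x - (n : ℝ) * ℓ| < (n : ℝ) * t := by
        rw [abs_lt]
        constructor <;> nlinarith
      exact absurd hω (not_le.mpr h2)
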